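/- arXiv:1203.6198 — 4 statements merged into one kernel-verified Lean document; each statement's English description precedes it below -/
import Mathlib

section
/- Let (L, θ) be a field of prime characteristic p equipped with a higher derivation, and fix ℓ₀ ≥ 0. Then the following are equivalent: (1) for all j, m > 0 with j + m ≤ p^{ℓ₀+1}, the iteration rule θ^(j) ∘ θ^(m) = binom(j+m, j)·θ^(j+m) holds on L; (2) for all 0 ≤ ℓ ≤ ℓ₀ one has: (a) a!·θ^(m + a·p^ℓ) = (θ^(p^ℓ))^a ∘ θ^(m) for all 0 ≤ m < p^ℓ and 0 < a < p (where (θ^(p^ℓ))^a denotes the a-fold composition; note a! is invertible in L since a < p); (b) the p-fold composition (θ^(p^ℓ))^p = 0; and (c) θ^(p^j) ∘ θ^(p^ℓ) = θ^(p^ℓ) ∘ θ^(p^j) for all 0 ≤ j < ℓ. -/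
/-- A higher derivation on a commutative ring `R` is a ring homomorphism
`θ : R → R[[T]]` such that the constant term of `θ r` is `r` for every `r`. -/
def IsHigherDerivation {R : Type*} [CommRing R] (θ : R →+* PowerSeries R) : Prop :=
  ∀ r : R, PowerSeries.constantCoeff (θ r) = r

/-- `hdCoeff θ n r = θ^(n)(r)`, the coefficient of `T^n` in `θ r`. -/
noncomputable def hdCoeff {R : Type*} [CommRing R] (θ : R →+* PowerSeries R) (n : ℕ) :
    R → R := fun r => PowerSeries.coeff n (θ r)

section Aux
open Nat Finset

variable {L : Type*} [Field L] {p : ℕ}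

lemma hd_zero_index (θ : L →+* PowerSeries L) (hθ : IsHigherDerivation θ) (y : L) :
    hdCoeff θ 0 y = y := by
  simpa [hdCoeff, PowerSeries.coeff_zero_eq_constantCoeff] using hθ y

lemma hd_map_zero (θ : L →+* PowerSeries L) (n : ℕ) : hdCoeff θ n 0 = 0 := by
  simp [hdCoeff]

lemma hd_natCast_mul (θ : L →+* PowerSeries L) (n c : ℕ) (y : L) :
    hdCoeff θ n ((c : L) * y) = (c : L) * hdCoeff θ n y := by
  have h : θ ((c : L) * y) = (PowerSeries.C ((c : ℕ) : L)) * θ y := by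
    rw [map_mul]
    congr 1
    rw [map_natCast θ, map_natCast (PowerSeries.C (R := L))]
  simp only [hdCoeff]
  rw [h, PowerSeries.coeff_C_mul]

lemma iter_natCast_mul (θ : L →+* PowerSeries L) (n b c : ℕ) (y : L) :
    (hdCoeff θ n)^[b] ((c : L) * y) = (c : L) * (hdCoeff θ n)^[b] y := by
  induction b generalizing y with
  | zero => rfl
  | succ b ih =>
      rw [Function.iterate_succ_apply, Function.iterate_succ_apply, hd_natCast_mul, ih]

lemma iter_map_zero (θ : L →+* PowerSeries L) (n b : ℕ) : (hdCoeff θ n)^[b] (0 : L) = 0 :=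
  Function.iterate_fixed (hd_map_zero θ n) b

lemma comm_iterate {α : Type*} {f g : α → α} (h : ∀ y, f (g y) = g (f y)) :
    ∀ (a b : ℕ) (y : α), f^[a] (g^[b] y) = g^[b] (f^[a] y) := by
  have h1 : ∀ (b : ℕ) (y : α), f (g^[b] y) = g^[b] (f y) := by
    intro b
    induction b with
    | zero => intro y; rfl
    | succ b ih =>
        intro y
        rw [Function.iterate_succ_apply', h, ih, Function.iterate_succ_apply']
  intro a
  induction a with
  | zero => intro b y; rfl
  | succ a ih =>
      intro b y
      rw [Function.iterate_succ_apply, Function.iterate_succ_apply, h1, ih]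

end Aux

noncomputable def hdIter {L : Type*} [CommRing L] (θ : L →+* PowerSeries L) (p : ℕ)
    (e : ℕ → ℕ) : ℕ → L → L
  | 0, y => y
  | (k+1), y => (hdCoeff θ (p ^ k))^[e k] (hdIter θ p e k y)

section Aux2
open Nat Finset

variable {L : Type*} [Field L] {p : ℕ}

lemma hdIter_congr (θ : L →+* PowerSeries L) (e f : ℕ → ℕ) :
    ∀ k, (∀ i < k, e i = f i) → ∀ y, hdIter θ p e k y = hdIter θ p f k y := by
  intro k
  induction k with
  | zero => intro _ y; rfl
  | succ k ih =>
      intro h y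
      show (hdCoeff θ (p ^ k))^[e k] (hdIter θ p e k y)
        = (hdCoeff θ (p ^ k))^[f k] (hdIter θ p f k y)
      rw [h k (Nat.lt_succ_self k), ih (fun i hi => h i (hi.trans (Nat.lt_succ_self k))) y]

lemma hdIter_zero_arg (θ : L →+* PowerSeries L) (e : ℕ → ℕ) :
    ∀ k, hdIter θ p e k (0 : L) = 0 := by
  intro k
  induction k with
  | zero => rfl
  | succ k ih =>
      show (hdCoeff θ (p ^ k))^[e k] (hdIter θ p e k 0) = 0
      rw [ih, iter_map_zero]

lemma hdIter_natCast_mul (θ : L →+* PowerSeries L) (e : ℕ → ℕ) (c : ℕ) :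
    ∀ k y, hdIter θ p e k ((c : L) * y) = (c : L) * hdIter θ p e k y := by
  intro k
  induction k with
  | zero => intro y; rfl
  | succ k ih =>
      intro y
      show (hdCoeff θ (p ^ k))^[e k] (hdIter θ p e k (↑c * y))
        = ↑c * (hdCoeff θ (p ^ k))^[e k] (hdIter θ p e k y)
      rw [ih, iter_natCast_mul]

lemma hdIter_comm_iter (θ : L →+* PowerSeries L) (ℓ₀ : ℕ)
    (hcomm : ∀ i jdx : ℕ, i ≤ ℓ₀ → jdx ≤ ℓ₀ → ∀ z,
      hdCoeff θ (p ^ i) (hdCoeff θ (p ^ jdx) z) = hdCoeff θ (p ^ jdx) (hdCoeff θ (p ^ i) z))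
    (jdx b : ℕ) (hj : jdx ≤ ℓ₀) :
    ∀ k, k ≤ ℓ₀ + 1 → ∀ (e : ℕ → ℕ) (y : L),
      hdIter θ p e k ((hdCoeff θ (p ^ jdx))^[b] y)
        = (hdCoeff θ (p ^ jdx))^[b] (hdIter θ p e k y) := by
  intro k
  induction k with
  | zero => intro _ e y; rfl
  | succ k ih =>
      intro hk e y
      show (hdCoeff θ (p ^ k))^[e k] (hdIter θ p e k ((hdCoeff θ (p ^ jdx))^[b] y))
        = (hdCoeff θ (p ^ jdx))^[b] ((hdCoeff θ (p ^ k))^[e k] (hdIter θ p e k y))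
      rw [ih (by omega) e y]
      exact comm_iterate (hcomm k jdx (by omega) hj) (e k) b _

lemma hdIter_merge (θ : L →+* PowerSeries L) (ℓ₀ : ℕ)
    (hcomm : ∀ i jdx : ℕ, i ≤ ℓ₀ → jdx ≤ ℓ₀ → ∀ z,
      hdCoeff θ (p ^ i) (hdCoeff θ (p ^ jdx) z) = hdCoeff θ (p ^ jdx) (hdCoeff θ (p ^ i) z)) :
    ∀ k, k ≤ ℓ₀ + 1 → ∀ (e f : ℕ → ℕ) (y : L),
      hdIter θ p e k (hdIter θ p f k y) = hdIter θ p (fun i => e i + f i) k y := by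
  intro k
  induction k with
  | zero => intro _ e f y; rfl
  | succ k ih =>
      intro hk e f y
      show (hdCoeff θ (p ^ k))^[e k]
          (hdIter θ p e k ((hdCoeff θ (p ^ k))^[f k] (hdIter θ p f k y)))
        = (hdCoeff θ (p ^ k))^[e k + f k] (hdIter θ p (fun i => e i + f i) k y)
      rw [hdIter_comm_iter θ ℓ₀ hcomm k (f k) (by omega) k (by omega) e _,
        ih (by omega) e f y, Function.iterate_add_apply]

lemma hdIter_eq_zero (θ : L →+* PowerSeries L) (ℓ₀ : ℕ)
    (hb : ∀ ℓ, ℓ ≤ ℓ₀ → ∀ y : L, (hdCoeff θ (p ^ ℓ))^[p] y = 0) :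
    ∀ k, k ≤ ℓ₀ + 1 → ∀ (e : ℕ → ℕ), (∃ i < k, p ≤ e i) → ∀ y : L,
      hdIter θ p e k y = 0 := by
  intro k
  induction k with
  | zero => rintro _ e ⟨i, hi, _⟩ y; omega
  | succ k ih =>
      rintro hk e ⟨i, hi, hpe⟩ y
      show (hdCoeff θ (p ^ k))^[e k] (hdIter θ p e k y) = 0
      rcases Nat.lt_succ_iff_lt_or_eq.mp hi with h | rfl
      · rw [ih (by omega) e ⟨i, h, hpe⟩ y, iter_map_zero]
      · rw [show e i = (e i - p) + p by omega, Function.iterate_add_apply,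
          hb i (by omega), iter_map_zero]

end Aux2

section Digits
open Nat Finset

variable {p : ℕ}

lemma digit_def (hp0 : 0 < p) (n i : ℕ) : n % p ^ (i + 1) / p ^ i = n / p ^ i % p := by
  rw [pow_succ]
  exact Nat.mod_mul_right_div_self n (p ^ i) p

lemma mod_pow_succ_eq (n i : ℕ) (hp0 : 0 < p) :
    n % p ^ (i + 1) = n % p ^ i + p ^ i * (n / p ^ i % p) := by
  conv_lhs => rw [← Nat.div_add_mod (n % p ^ (i + 1)) (p ^ i)]
  rw [digit_def hp0, Nat.mod_mod_of_dvd _ (pow_dvd_pow p (Nat.le_succ i))]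
  exact Nat.add_comm _ _

lemma digit_mod_pow (hp0 : 0 < p) (n k i : ℕ) (hik : i < k) :
    n % p ^ k / p ^ i % p = n / p ^ i % p := by
  have h1 : n = n % p ^ k + p ^ i * (p ^ (k - i) * (n / p ^ k)) := by
    rw [← mul_assoc, ← pow_add, show i + (k - i) = k by omega]
    exact (Nat.mod_add_div n (p ^ k)).symm
  conv_rhs => rw [h1]
  rw [Nat.add_mul_div_left _ _ (pow_pos hp0 i)]
  rw [show p ^ (k - i) = p * p ^ (k - i - 1) by rw [← _root_.pow_succ']; congr 1; omega]
  rw [mul_assoc, Nat.add_mul_mod_self_left]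

lemma nocarry_sum (hp0 : 0 < p) (j m : ℕ) :
    ∀ K, (∀ i < K, j / p ^ i % p + m / p ^ i % p < p) →
      j % p ^ K + m % p ^ K < p ^ K ∧ (j + m) % p ^ K = j % p ^ K + m % p ^ K := by
  intro K
  induction K with
  | zero => intro _; rw [pow_zero]; omega
  | succ K ih =>
      intro h
      obtain ⟨ihlt, _⟩ := ih (fun i hi => h i (hi.trans (Nat.lt_succ_self K)))
      have hj := mod_pow_succ_eq j K hp0
      have hm := mod_pow_succ_eq m K hp0
      have hd := h K (Nat.lt_succ_self K)
      have hq : (0:ℕ) < p ^ K := pow_pos hp0 K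
      have hps : p ^ (K + 1) = p ^ K * p := pow_succ p K
      have hmul : p ^ K * (j / p ^ K % p) + p ^ K * (m / p ^ K % p) ≤ p ^ K * (p - 1) := by
        rw [← Nat.mul_add]
        exact Nat.mul_le_mul_left _ (by omega)
      have hlt : j % p ^ (K + 1) + m % p ^ (K + 1) < p ^ (K + 1) := by
        have : p ^ K * (p - 1) + p ^ K = p ^ K * p := by
          rw [Nat.mul_sub, Nat.mul_one]
          have : p ^ K ≤ p ^ K * p := Nat.le_mul_of_pos_right _ hp0
          omega
        omega
      refine ⟨hlt, ?_⟩
      rw [Nat.add_mod, Nat.mod_eq_of_lt hlt]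

lemma nocarry_digits_add (hp0 : 0 < p) (j m K : ℕ)
    (h : ∀ i < K, j / p ^ i % p + m / p ^ i % p < p) (i : ℕ) (hi : i < K) :
    (j + m) / p ^ i % p = j / p ^ i % p + m / p ^ i % p := by
  obtain ⟨hlt_i, heq_i⟩ := nocarry_sum hp0 j m i (fun i' hi' => h i' (hi'.trans hi))
  obtain ⟨_, heq_si⟩ := nocarry_sum hp0 j m (i + 1) (fun i' hi' => h i' (by omega))
  rw [← digit_def hp0 (j + m) i, heq_si, mod_pow_succ_eq j i hp0, mod_pow_succ_eq m i hp0]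
  rw [show j % p ^ i + p ^ i * (j / p ^ i % p) + (m % p ^ i + p ^ i * (m / p ^ i % p))
      = (j % p ^ i + m % p ^ i) + p ^ i * (j / p ^ i % p + m / p ^ i % p) by ring]
  rw [Nat.add_mul_div_left _ _ (pow_pos hp0 i), Nat.div_eq_of_lt hlt_i, Nat.zero_add]

lemma carry_digit (hp0 : 0 < p) (j m i₀ : ℕ)
    (hmin : ∀ i < i₀, j / p ^ i % p + m / p ^ i % p < p)
    (hc : p ≤ j / p ^ i₀ % p + m / p ^ i₀ % p) :
    (j + m) / p ^ i₀ % p + p = j / p ^ i₀ % p + m / p ^ i₀ % p := by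
  obtain ⟨hlt_i, heq_i⟩ := nocarry_sum hp0 j m i₀ hmin
  have hdj : j / p ^ i₀ % p < p := Nat.mod_lt _ hp0
  have hdm : m / p ^ i₀ % p < p := Nat.mod_lt _ hp0
  set dj := j / p ^ i₀ % p
  set dm := m / p ^ i₀ % p
  set S := j % p ^ i₀ + m % p ^ i₀ with hS
  have hq : (0:ℕ) < p ^ i₀ := pow_pos hp0 i₀
  have key : (j + m) % p ^ (i₀ + 1) = S + p ^ i₀ * (dj + dm - p) := by
    have e1 : p ^ i₀ * (dj + dm - p) + p ^ i₀ * p = p ^ i₀ * dj + p ^ i₀ * dm := by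
      rw [← Nat.mul_add, ← Nat.mul_add]
      congr 1
      omega
    have e2 : p ^ i₀ * (dj + dm - p) + p ^ i₀ ≤ p ^ i₀ * p := by
      have h5 : p ^ i₀ * (dj + dm - p + 1) ≤ p ^ i₀ * p := Nat.mul_le_mul_left _ (by omega)
      rw [Nat.mul_add, Nat.mul_one] at h5
      exact h5
    have e4 : p ^ (i₀ + 1) = p ^ i₀ * p := pow_succ p i₀
    rw [Nat.add_mod, mod_pow_succ_eq j i₀ hp0, mod_pow_succ_eq m i₀ hp0,
      show j % p ^ i₀ + p ^ i₀ * dj + (m % p ^ i₀ + p ^ i₀ * dm)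
          = S + p ^ i₀ * (dj + dm - p) + p ^ i₀ * p by omega,
      ← pow_succ, Nat.add_mod_right]
    exact Nat.mod_eq_of_lt (by omega)
  have hdig : (j + m) / p ^ i₀ % p = dj + dm - p := by
    rw [← digit_def hp0 (j + m) i₀, key, Nat.add_mul_div_left _ _ hq,
      Nat.div_eq_of_lt hlt_i, Nat.zero_add]
  omega

end Digits

section Lucas
open Nat Finset

variable {p : ℕ} [hp : Fact p.Prime]

lemma choose_pow_modeq (n ℓ : ℕ) : (n.choose (p ^ ℓ)) ≡ n / p ^ ℓ [MOD p] := by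
  induction ℓ generalizing n with
  | zero => rw [pow_zero, Nat.choose_one_right, Nat.div_one]
  | succ ℓ ih =>
      have h := Choose.choose_modEq_choose_mod_mul_choose_div_nat (p := p) (n := n)
        (k := p ^ (ℓ + 1))
      have h1 : p ^ (ℓ + 1) % p = 0 := by
        rw [pow_succ]
        exact Nat.mul_mod_left _ _
      have h2 : p ^ (ℓ + 1) / p = p ^ ℓ := by
        rw [pow_succ, Nat.mul_div_cancel _ hp.out.pos]
      rw [h1, h2, Nat.choose_zero_right, one_mul] at h
      have h3 := ih (n / p)
      rw [Nat.div_div_eq_div_mul, ← _root_.pow_succ'] at h3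
      exact h.trans h3

lemma dvd_choose_of_digit_lt (n k i : ℕ) (h : n / p ^ i % p < k / p ^ i % p) :
    p ∣ n.choose k := by
  induction i generalizing n k with
  | zero =>
      have hs := Choose.choose_modEq_choose_mod_mul_choose_div_nat (p := p) (n := n) (k := k)
      rw [pow_zero, Nat.div_one, Nat.div_one] at h
      rw [Nat.choose_eq_zero_of_lt h, zero_mul] at hs
      exact (Nat.modEq_zero_iff_dvd).mp hs
  | succ i ih =>
      have hd : (n / p) / p ^ i % p < (k / p) / p ^ i % p := by
        rwa [Nat.div_div_eq_div_mul, Nat.div_div_eq_div_mul, ← _root_.pow_succ']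
      have h2 := ih (n / p) (k / p) hd
      have hs := Choose.choose_modEq_choose_mod_mul_choose_div_nat (p := p) (n := n) (k := k)
      have h3 : (n % p).choose (k % p) * ((n / p).choose (k / p)) ≡ 0 [MOD p] :=
        (Nat.modEq_zero_iff_dvd).mpr (Dvd.dvd.mul_left h2 _)
      exact (Nat.modEq_zero_iff_dvd).mp (hs.trans h3)

lemma case1_cong (hp0 : 0 < p) (j m K : ℕ) (hj : j < p ^ K) (hsum : j + m < p ^ K)
    (h : ∀ i < K, j / p ^ i % p + m / p ^ i % p < p) :
    ((j + m).choose j) * (∏ i ∈ range K, (j / p ^ i % p)!) * (∏ i ∈ range K, (m / p ^ i % p)!)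
      ≡ (∏ i ∈ range K, ((j + m) / p ^ i % p)!) [MOD p] := by
  have hL : (j + m).choose j ≡ ∏ i ∈ range K, ((j + m) / p ^ i % p).choose (j / p ^ i % p)
      [MOD p] := Choose.choose_modEq_prod_range_choose_nat hsum hj
  have hEq : (∏ i ∈ range K, ((j + m) / p ^ i % p).choose (j / p ^ i % p))
      * (∏ i ∈ range K, (j / p ^ i % p)!) * (∏ i ∈ range K, (m / p ^ i % p)!)
      = ∏ i ∈ range K, ((j + m) / p ^ i % p)! := by
    rw [← Finset.prod_mul_distrib, ← Finset.prod_mul_distrib]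
    refine Finset.prod_congr rfl fun i hi => ?_
    rw [nocarry_digits_add hp0 j m K h i (Finset.mem_range.mp hi), Nat.choose_symm_add]
    exact Nat.add_choose_mul_factorial_mul_factorial _ _
  calc ((j + m).choose j) * (∏ i ∈ range K, (j / p ^ i % p)!) * (∏ i ∈ range K, (m / p ^ i % p)!)
      ≡ (∏ i ∈ range K, ((j + m) / p ^ i % p).choose (j / p ^ i % p))
        * (∏ i ∈ range K, (j / p ^ i % p)!) * (∏ i ∈ range K, (m / p ^ i % p)!) [MOD p] :=
        (hL.mul_right _).mul_right _
    _ = _ := hEq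

end Lucas

open Nat Finset in
lemma hd_rep {L : Type*} [Field L] {p : ℕ} [hp : Fact p.Prime] (θ : L →+* PowerSeries L)
    (hθ : IsHigherDerivation θ) (ℓ₀ : ℕ)
    (Ha : ∀ ℓ, ℓ ≤ ℓ₀ → ∀ m, m < p ^ ℓ → ∀ a, 0 < a → a < p → ∀ y : L,
      (a.factorial : L) * hdCoeff θ (m + a * p ^ ℓ) y
        = (hdCoeff θ (p ^ ℓ))^[a] (hdCoeff θ m y)) :
    ∀ k, k ≤ ℓ₀ + 1 → ∀ n, n < p ^ k → ∀ z : L,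
      ((∏ i ∈ Finset.range k, (n / p ^ i % p).factorial : ℕ) : L) * hdCoeff θ n z
        = hdIter θ p (fun i => n / p ^ i % p) k z := by
  have hp0 : 0 < p := hp.out.pos
  intro k
  induction k with
  | zero =>
      intro _ n hn z
      have hn0 : n = 0 := by
        rw [pow_zero] at hn; omega
      subst hn0
      simp [hd_zero_index θ hθ, hdIter]
  | succ k ih =>
      intro hk n hn z
      have hq : (0:ℕ) < p ^ k := pow_pos hp0 k
      have ha : n / p ^ k < p := by
        rw [Nat.div_lt_iff_lt_mul hq, mul_comm]
        rwa [pow_succ] at hn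
      have hm' : n % p ^ k < p ^ k := Nat.mod_lt _ hq
      have hdig : ∀ i < k, n / p ^ i % p = n % p ^ k / p ^ i % p :=
        fun i hi => (digit_mod_pow hp0 n k i hi).symm
      have hprod : (∏ i ∈ Finset.range (k+1), (n / p ^ i % p).factorial)
          = (∏ i ∈ Finset.range k, (n % p ^ k / p ^ i % p).factorial)
            * (n / p ^ k).factorial := by
        rw [Finset.prod_range_succ, Nat.mod_eq_of_lt ha]
        congr 1
        exact Finset.prod_congr rfl fun i hi => by rw [hdig i (Finset.mem_range.mp hi)]
      show _ = (hdCoeff θ (p ^ k))^[n / p ^ k % p] (hdIter θ p (fun i => n / p ^ i % p) k z)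
      rw [Nat.mod_eq_of_lt ha]
      by_cases ha0 : n / p ^ k = 0
      · have h6 := Nat.mod_add_div' n (p ^ k)
        have hnk : n < p ^ k := by
          rw [ha0] at h6; omega
        rw [hprod, ha0, Nat.factorial_zero, Nat.mul_one, Function.iterate_zero_apply]
        have h7 : n % p ^ k = n := Nat.mod_eq_of_lt hnk
        rw [h7]
        exact ih (by omega) n hnk z
      · have hkey := Ha k (by omega) (n % p ^ k) hm' (n / p ^ k) (Nat.pos_of_ne_zero ha0) ha z
        rw [Nat.mod_add_div' n (p ^ k)] at hkey
        rw [hprod, Nat.cast_mul, mul_assoc, hkey, ← iter_natCast_mul,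
          ih (by omega) (n % p ^ k) hm' z,
          hdIter_congr θ (fun i => n % p ^ k / p ^ i % p) (fun i => n / p ^ i % p) k
            (fun i hi => (hdig i hi).symm) z]

/-- let `(L, θ)` be a field of prime characteristic `p` with a higher
derivation, and fix `ℓ₀ ≥ 0`.  The following are equivalent:
(1) for all `j, m > 0` with `j + m ≤ p^(ℓ₀+1)`, the iteration rule
`θ^(j) ∘ θ^(m) = binom(j+m,j)·θ^(j+m)` holds on `L`;
(2) for all `0 ≤ ℓ ≤ ℓ₀`:
(a) `a!·θ^(m+a·p^ℓ) = (θ^(p^ℓ))^a ∘ θ^(m)` for all `0 ≤ m < p^ℓ` and `0 < a < p`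
    (a-fold composition),
(b) the `p`-fold composition `(θ^(p^ℓ))^p = 0`, and
(c) `θ^(p^j) ∘ θ^(p^ℓ) = θ^(p^ℓ) ∘ θ^(p^j)` for all `0 ≤ j < ℓ`. -/
theorem torsion_group_schemes_stmt_8 {L : Type*} [Field L] (p : ℕ) [Fact p.Prime]
    [CharP L p] (θ : L →+* PowerSeries L) (hθ : IsHigherDerivation θ) (ℓ₀ : ℕ) :
    (∀ j m : ℕ, 0 < j → 0 < m → j + m ≤ p ^ (ℓ₀ + 1) → ∀ y : L,
        hdCoeff θ j (hdCoeff θ m y) = ((j + m).choose j : L) * hdCoeff θ (j + m) y)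
    ↔
    (∀ ℓ : ℕ, ℓ ≤ ℓ₀ →
      (∀ m : ℕ, m < p ^ ℓ → ∀ a : ℕ, 0 < a → a < p → ∀ y : L,
          (a.factorial : L) * hdCoeff θ (m + a * p ^ ℓ) y =
            (hdCoeff θ (p ^ ℓ))^[a] (hdCoeff θ m y)) ∧
      (∀ y : L, (hdCoeff θ (p ^ ℓ))^[p] y = 0) ∧
      (∀ j : ℕ, j < ℓ → ∀ y : L,
          hdCoeff θ (p ^ j) (hdCoeff θ (p ^ ℓ) y) =
            hdCoeff θ (p ^ ℓ) (hdCoeff θ (p ^ j) y))) := by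
  have hpp : p.Prime := Fact.out
  have hp2 : 2 ≤ p := hpp.two_le
  have hp0 : 0 < p := by omega
  constructor
  · intro H
    have key : ∀ ℓ, ℓ ≤ ℓ₀ → ∀ m, m < p ^ ℓ → ∀ a, a < p → ∀ y : L,
        (a.factorial : L) * hdCoeff θ (m + a * p ^ ℓ) y
          = (hdCoeff θ (p ^ ℓ))^[a] (hdCoeff θ m y) := by
      intro ℓ hℓ m hm a
      induction a with
      | zero => intro _ y; simp
      | succ a iha =>
          intro ha y
          have ha' : a < p := by omega
          rw [Function.iterate_succ_apply', ← iha ha' y, hd_natCast_mul]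
          by_cases h0 : m + a * p ^ ℓ = 0
          · have hm0 : m = 0 := by omega
            have hpl : 0 < p ^ ℓ := pow_pos hp0 ℓ
            have ha0 : a = 0 := by
              rcases Nat.mul_eq_zero.mp (by omega : a * p ^ ℓ = 0) with h | h
              · exact h
              · omega
            subst hm0; subst ha0
            simp [hd_zero_index θ hθ]
          · have h2 : p * p ^ ℓ ≤ p ^ (ℓ₀ + 1) := by
              rw [← _root_.pow_succ']
              exact Nat.pow_le_pow_right hp0 (by omega)
            have h1 : a * p ^ ℓ + 2 * p ^ ℓ ≤ p * p ^ ℓ := by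
              have h3 := Nat.mul_le_mul_right (p ^ ℓ) (show a + 2 ≤ p by omega)
              rw [Nat.add_mul] at h3
              exact h3
            have hbound : p ^ ℓ + (m + a * p ^ ℓ) ≤ p ^ (ℓ₀ + 1) := by omega
            rw [H (p ^ ℓ) (m + a * p ^ ℓ) (pow_pos hp0 ℓ) (Nat.pos_of_ne_zero h0) hbound y]
            have h4 : (p ^ ℓ + (m + a * p ^ ℓ)) / p ^ ℓ = a + 1 := by
              rw [show p ^ ℓ + (m + a * p ^ ℓ) = m + (a + 1) * p ^ ℓ by ring,
                Nat.add_mul_div_right _ _ (pow_pos hp0 ℓ), Nat.div_eq_of_lt hm, Nat.zero_add]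
            have h5 := choose_pow_modeq (p := p) (p ^ ℓ + (m + a * p ^ ℓ)) ℓ
            rw [h4] at h5
            have hco : (((p ^ ℓ + (m + a * p ^ ℓ)).choose (p ^ ℓ) : ℕ) : L) = ((a + 1 : ℕ) : L) :=
              CharP.natCast_eq_natCast' L p h5
            rw [hco, show p ^ ℓ + (m + a * p ^ ℓ) = m + (a + 1) * p ^ ℓ by ring,
              Nat.factorial_succ]
            push_cast
            ring
    refine fun ℓ hℓ => ⟨fun m hm a ha0 hap y => key ℓ hℓ m hm a hap y, ?_, ?_⟩
    · intro y
      have h8 := Function.iterate_succ_apply' (hdCoeff θ (p ^ ℓ)) (p - 1) y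
      rw [show (p - 1).succ = p by omega] at h8
      rw [h8]
      have hkey := key ℓ hℓ 0 (pow_pos hp0 ℓ) (p - 1) (by omega) y
      rw [hd_zero_index θ hθ] at hkey
      rw [← hkey, hd_natCast_mul]
      have hpl : 0 < p ^ ℓ := pow_pos hp0 ℓ
      have hpos : 0 < 0 + (p - 1) * p ^ ℓ := by
        have := Nat.mul_pos (show 0 < p - 1 by omega) hpl
        omega
      have h1 : 1 * p ^ ℓ + (p - 1) * p ^ ℓ = p * p ^ ℓ := by
        rw [← Nat.add_mul]
        congr 1
        omega
      have h2 : p * p ^ ℓ ≤ p ^ (ℓ₀ + 1) := by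
        rw [← _root_.pow_succ']
        exact Nat.pow_le_pow_right hp0 (by omega)
      have hbound : p ^ ℓ + (0 + (p - 1) * p ^ ℓ) ≤ p ^ (ℓ₀ + 1) := by omega
      rw [H (p ^ ℓ) (0 + (p - 1) * p ^ ℓ) (pow_pos hp0 ℓ) hpos hbound y]
      have h4 : (p ^ ℓ + (0 + (p - 1) * p ^ ℓ)) / p ^ ℓ = p := by
        rw [Nat.zero_add, show p ^ ℓ + (p - 1) * p ^ ℓ = p * p ^ ℓ by omega,
          mul_comm p (p ^ ℓ), Nat.mul_div_cancel_left _ hpl]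
      have h5 := choose_pow_modeq (p := p) (p ^ ℓ + (0 + (p - 1) * p ^ ℓ)) ℓ
      rw [h4] at h5
      have hco := CharP.natCast_eq_natCast' L p h5
      rw [hco, CharP.cast_eq_zero L p, zero_mul, mul_zero]
    · intro jdx hjx y
      have h1 : p ^ jdx ≤ p ^ ℓ := Nat.pow_le_pow_right hp0 (by omega)
      have h2 : 2 * p ^ ℓ ≤ p * p ^ ℓ := Nat.mul_le_mul_right _ hp2
      have h3 : p * p ^ ℓ ≤ p ^ (ℓ₀ + 1) := by
        rw [← _root_.pow_succ']
        exact Nat.pow_le_pow_right hp0 (by omega)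
      have hb1 : p ^ jdx + p ^ ℓ ≤ p ^ (ℓ₀ + 1) := by omega
      rw [H (p ^ jdx) (p ^ ℓ) (pow_pos hp0 jdx) (pow_pos hp0 ℓ) hb1 y,
        H (p ^ ℓ) (p ^ jdx) (pow_pos hp0 ℓ) (pow_pos hp0 jdx) (by omega) y,
        Nat.add_comm (p ^ ℓ) (p ^ jdx), Nat.choose_symm_add]
  · intro H j m hj hm hsum y
    have hcomm : ∀ i jdx : ℕ, i ≤ ℓ₀ → jdx ≤ ℓ₀ → ∀ z : L,
        hdCoeff θ (p ^ i) (hdCoeff θ (p ^ jdx) z)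
          = hdCoeff θ (p ^ jdx) (hdCoeff θ (p ^ i) z) := by
      intro i jdx hi hjx z
      rcases lt_trichotomy i jdx with h | h | h
      · exact (H jdx hjx).2.2 i h z
      · rw [h]
      · exact ((H i hi).2.2 jdx h z).symm
    have hjK : j < p ^ (ℓ₀ + 1) := by omega
    have hmK : m < p ^ (ℓ₀ + 1) := by omega
    have hrep := hd_rep θ hθ ℓ₀ (fun ℓ hℓ => (H ℓ hℓ).1)
    have main : ((∏ i ∈ Finset.range (ℓ₀ + 1), (j / p ^ i % p).factorial : ℕ) : L) *
        (((∏ i ∈ Finset.range (ℓ₀ + 1), (m / p ^ i % p).factorial : ℕ) : L) *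
          hdCoeff θ j (hdCoeff θ m y))
        = hdIter θ p (fun i => j / p ^ i % p + m / p ^ i % p) (ℓ₀ + 1) y := by
      rw [← hd_natCast_mul θ j, hrep (ℓ₀ + 1) le_rfl m hmK y,
        hrep (ℓ₀ + 1) le_rfl j hjK _,
        hdIter_merge θ ℓ₀ hcomm (ℓ₀ + 1) le_rfl]
    have hfac : ∀ t : ℕ,
        ((∏ i ∈ Finset.range (ℓ₀ + 1), (t / p ^ i % p).factorial : ℕ) : L) ≠ 0 := by
      intro t
      rw [Nat.cast_prod]
      refine Finset.prod_ne_zero_iff.mpr fun i _ => ?_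
      have hlt : t / p ^ i % p < p := Nat.mod_lt _ hp0
      intro h0
      rw [CharP.cast_eq_zero_iff L p] at h0
      exact absurd ((Nat.Prime.dvd_factorial hpp).mp h0) (by omega)
    by_cases hcar : ∀ i < ℓ₀ + 1, j / p ^ i % p + m / p ^ i % p < p
    · have hnc := nocarry_sum hp0 j m (ℓ₀ + 1) hcar
      rw [Nat.mod_eq_of_lt hjK, Nat.mod_eq_of_lt hmK] at hnc
      have hsum' : j + m < p ^ (ℓ₀ + 1) := hnc.1
      have hdig := nocarry_digits_add hp0 j m (ℓ₀ + 1) hcar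
      rw [hdIter_congr θ (fun i => j / p ^ i % p + m / p ^ i % p)
          (fun i => (j + m) / p ^ i % p) (ℓ₀ + 1) (fun i hi => (hdig i hi).symm) y,
        ← hrep (ℓ₀ + 1) le_rfl (j + m) hsum' y] at main
      have hmod := case1_cong hp0 j m (ℓ₀ + 1) hjK hsum' hcar
      have hcast := CharP.natCast_eq_natCast' L p hmod
      rw [Nat.cast_mul, Nat.cast_mul] at hcast
      refine mul_left_cancel₀ (hfac m) (mul_left_cancel₀ (hfac j) ?_)
      rw [main, ← hcast]
      ring
    · push_neg at hcar
      obtain ⟨i1, hi1, hpi1⟩ := hcar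
      have hzero : hdIter θ p (fun i => j / p ^ i % p + m / p ^ i % p) (ℓ₀ + 1) y = 0 :=
        hdIter_eq_zero θ ℓ₀ (fun ℓ hℓ => (H ℓ hℓ).2.1) (ℓ₀ + 1) le_rfl _ ⟨i1, hi1, hpi1⟩ y
      rw [hzero] at main
      have hX : hdCoeff θ j (hdCoeff θ m y) = 0 := by
        rcases mul_eq_zero.mp main with h | h
        · exact absurd h (hfac j)
        rcases mul_eq_zero.mp h with h' | h'
        · exact absurd h' (hfac m)
        · exact h'
      have hex : ∃ i, p ≤ j / p ^ i % p + m / p ^ i % p := ⟨i1, hpi1⟩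
      have hspec := Nat.find_spec hex
      have hmin : ∀ i < Nat.find hex, j / p ^ i % p + m / p ^ i % p < p := fun i hi => by
        have := Nat.find_min hex hi
        omega
      have hcd := carry_digit hp0 j m (Nat.find hex) hmin hspec
      have hdm : m / p ^ (Nat.find hex) % p < p := Nat.mod_lt _ hp0
      have hdvd : p ∣ (j + m).choose j :=
        dvd_choose_of_digit_lt (j + m) j (Nat.find hex) (by omega)
      rw [hX, (CharP.cast_eq_zero_iff L p _).mpr hdvd, zero_mul]
end

section
/- Let C be a field of prime characteristic p, and let (F, θ) be an ID-field of characteristic p containing an element t with θ(t) = t + T (e.g. F ⊇ C(t) with the iterative derivation with respect to t). Let L be a finitely generated separable field extension of F with a higher derivation on L (also denoted θ) extending the one on F, let x_1, …, x_k be a separating transcendence basis of L over F (i.e. x_1, …, x_k algebraically independent over F and L finite separable over F(x_1, …, x_k)), and set ξ_{i,n} := θ^(n)(x_i). Assume ξ_{i,n} ∈ L^p·F for all i = 1, …, k and n ≥ 1, where L^p·F denotes the subfield of L generated by F together with all p-th powers of elements of L. Then for any ℓ₀ ≥ 0 the following are equivalent: (1) for all j, m > 0 with j + m ≤ p^{ℓ₀+1},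 one has θ^(j)(θ^(m)(y)) = binom(j+m, j)·θ^(j+m)(y) for ALL y ∈ L; (3) the same identities θ^(j)(θ^(m)(x_i)) = binom(j+m, j)·θ^(j+m)(x_i), for all j, m > 0 with j + m ≤ p^{ℓ₀+1}, hold for the finitely many elements x_1, …, x_k. -/
/-- A higher derivation is iterative if `θ^(i) ∘ θ^(j) = binom(i+j, i)·θ^(i+j)`
for all `i, j ≥ 0`. -/
def IsIterativeDerivation {R : Type*} [CommRing R] (θ : R →+* PowerSeries R) : Prop :=
  IsHigherDerivation θ ∧
    ∀ i j : ℕ, ∀ r : R,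
      hdCoeff θ i (hdCoeff θ j r) = ((i + j).choose i : R) * hdCoeff θ (i + j) r

namespace Stmt9Aux

open PowerSeries Polynomial Finset

variable {L : Type*} [Field L]

/-- double coefficient: coefficient of `S^j T^m` in an element of `L[[S]][[T]]`. -/
noncomputable def Dc (j m : ℕ) (f : PowerSeries (PowerSeries L)) : L :=
  PowerSeries.coeff j (PowerSeries.coeff m f)

lemma Dc_add (j m : ℕ) (f g : PowerSeries (PowerSeries L)) :
    Dc j m (f + g) = Dc j m f + Dc j m g := by
  simp [Dc]

lemma Dc_sub (j m : ℕ) (f g : PowerSeries (PowerSeries L)) :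
    Dc j m (f - g) = Dc j m f - Dc j m g := by
  simp [Dc]

lemma Dc_zero (j m : ℕ) : Dc j m (0 : PowerSeries (PowerSeries L)) = 0 := by
  simp [Dc]

lemma Dc_mul (j m : ℕ) (f g : PowerSeries (PowerSeries L)) :
    Dc j m (f * g) =
      ∑ p ∈ antidiagonal m, ∑ q ∈ antidiagonal j, Dc q.1 p.1 f * Dc q.2 p.2 g := by
  unfold Dc
  rw [PowerSeries.coeff_mul, map_sum]
  exact Finset.sum_congr rfl fun p _ => PowerSeries.coeff_mul _ _ _

/-- the ideal of series all of whose coefficients in total degree `≤ N` vanish. -/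
noncomputable def Jid (L : Type*) [Field L] (N : ℕ) : Ideal (PowerSeries (PowerSeries L)) where
  carrier := {f | ∀ j m, j + m ≤ N → Dc j m f = 0}
  add_mem' := by
    intro a b ha hb j m h
    rw [Dc_add, ha j m h, hb j m h, add_zero]
  zero_mem' := fun j m _ => Dc_zero j m
  smul_mem' := by
    intro c f hf j m h
    rw [smul_eq_mul, Dc_mul]
    refine Finset.sum_eq_zero fun p hp => Finset.sum_eq_zero fun q hq => ?_
    rw [hf q.2 p.2 ?_, mul_zero]
    have h1 := Finset.HasAntidiagonal.antidiagonal.snd_le hp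
    have h2 := Finset.HasAntidiagonal.antidiagonal.snd_le hq
    omega

lemma mem_Jid {N : ℕ} {f : PowerSeries (PowerSeries L)} :
    f ∈ Jid L N ↔ ∀ j m, j + m ≤ N → Dc j m f = 0 := Iff.rfl

/-- vanishing up to total order `d` -/
def Vp (d : ℕ) (f : PowerSeries (PowerSeries L)) : Prop :=
  ∀ j m, j + m < d → Dc j m f = 0

lemma Vp_mul {a b : ℕ} {f g : PowerSeries (PowerSeries L)} (hf : Vp a f) (hg : Vp b g) :
    Vp (a + b) (f * g) := by
  intro j m h
  rw [Dc_mul]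
  refine Finset.sum_eq_zero fun p hp => Finset.sum_eq_zero fun q hq => ?_
  rw [Finset.HasAntidiagonal.mem_antidiagonal] at hp hq
  by_cases h1 : q.1 + p.1 < a
  · rw [hf q.1 p.1 h1, zero_mul]
  · rw [hg q.2 p.2 (by omega), mul_zero]

lemma Vp_pow {f : PowerSeries (PowerSeries L)} (hf : Vp 1 f) (i : ℕ) : Vp i (f ^ i) := by
  induction i with
  | zero => intro j m h; omega
  | succ n ih =>
    rw [pow_succ]
    exact Vp_mul ih hf

lemma pow_mem_Jid {N : ℕ} {f : PowerSeries (PowerSeries L)} (hf : Vp 1 f) :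
    f ^ (N + 1) ∈ Jid L N :=
  fun j m h => Vp_pow hf (N + 1) j m (by omega)

/-- `S + T` in `L[[S]][[T]]` -/
noncomputable def uu (L : Type*) [Field L] : PowerSeries (PowerSeries L) :=
  PowerSeries.C (R := PowerSeries L) PowerSeries.X + PowerSeries.X

noncomputable def CC (L : Type*) [Field L] : L →+* PowerSeries (PowerSeries L) :=
  (PowerSeries.C (R := PowerSeries L)).comp (PowerSeries.C (R := L))

lemma Dc_CC_mul (j m : ℕ) (a : L) (f : PowerSeries (PowerSeries L)) :
    Dc j m (CC L a * f) = a * Dc j m f := by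
  unfold Dc CC
  simp only [RingHom.coe_comp, Function.comp_apply]
  rw [PowerSeries.coeff_C_mul, PowerSeries.coeff_C_mul]

lemma Dc_uu_pow (j m i : ℕ) :
    Dc j m (uu L ^ i) = if i = j + m then ((j + m).choose j : L) else 0 := by
  unfold uu Dc
  rw [add_pow, map_sum, map_sum]
  have key : ∀ s ∈ Finset.range (i + 1),
      (PowerSeries.coeff j) ((PowerSeries.coeff m)
        ((PowerSeries.C (R := PowerSeries L) PowerSeries.X) ^ s * PowerSeries.X ^ (i - s)
          * (i.choose s : PowerSeries (PowerSeries L)))) =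
      if j = s ∧ m = i - s then (i.choose s : L) else 0 := by
    intro s hs
    rw [mul_comm _ ((i.choose s : PowerSeries (PowerSeries L))), ← nsmul_eq_mul, map_nsmul,
      map_nsmul, ← map_pow, PowerSeries.coeff_C_mul, PowerSeries.coeff_X_pow]
    by_cases h1 : m = i - s
    · rw [if_pos h1, mul_one, PowerSeries.coeff_X_pow]
      by_cases h2 : j = s
      · rw [if_pos h2, if_pos ⟨h2, h1⟩, nsmul_eq_mul, mul_one]
      · rw [if_neg h2, smul_zero, if_neg (by rintro ⟨a, b⟩; exact h2 a)]
    · rw [if_neg h1, mul_zero, map_zero, smul_zero, if_neg (by rintro ⟨a, b⟩; exact h1 b)]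
  rw [Finset.sum_congr rfl key]
  by_cases h : i = j + m
  · subst h
    rw [Finset.sum_eq_single_of_mem j (Finset.mem_range.mpr (by omega))]
    · rw [if_pos ⟨rfl, by omega⟩, if_pos rfl]
    · intro s hs hne
      rw [if_neg]
      rintro ⟨h1, -⟩; exact hne h1.symm
  · rw [if_neg h]
    apply Finset.sum_eq_zero
    intro s hs
    rw [if_neg]
    rintro ⟨h1, h2⟩
    rw [Finset.mem_range] at hs
    omega


noncomputable def ev (N : ℕ) (f : PowerSeries L) : PowerSeries (PowerSeries L) :=
  Polynomial.eval₂ (CC L) (uu L) (trunc (N + 1) f)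

lemma Vp_one_uu : Vp 1 (uu L) := by
  intro j m h
  have h2 := Dc_uu_pow (L := L) j m 1
  rw [pow_one] at h2
  rw [h2, if_neg (by omega)]

lemma Dc_sum {α : Type*} (j m : ℕ) (s : Finset α) (g : α → PowerSeries (PowerSeries L)) :
    Dc j m (∑ i ∈ s, g i) = ∑ i ∈ s, Dc j m (g i) := by
  unfold Dc
  rw [map_sum, map_sum]

lemma eval₂_mem_Jid {N : ℕ} {P : Polynomial L}
    (hP : ∀ i ≤ N, P.coeff i = 0) : Polynomial.eval₂ (CC L) (uu L) P ∈ Jid L N := by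
  rw [Polynomial.eval₂_eq_sum, Polynomial.sum_def]
  apply Ideal.sum_mem
  intro i hi
  by_cases h : i ≤ N
  · rw [hP i h, map_zero, zero_mul]
    exact (Jid L N).zero_mem
  · have heq : CC L (P.coeff i) * uu L ^ i
        = CC L (P.coeff i) * uu L ^ (i - (N + 1)) * uu L ^ (N + 1) := by
      rw [mul_assoc, ← pow_add]
      congr 2
      omega
    rw [heq]
    exact Ideal.mul_mem_left _ _ (pow_mem_Jid Vp_one_uu)

lemma Dc_ev {N j m : ℕ} (h : j + m ≤ N) (f : PowerSeries L) :
    Dc j m (ev N f) = ((j + m).choose j : L) * PowerSeries.coeff (j + m) f := by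
  unfold ev
  rw [Polynomial.eval₂_eq_sum, Polynomial.sum_def, Dc_sum]
  have key : ∀ i ∈ (trunc (N + 1) f).support,
      Dc j m (CC L ((trunc (N + 1) f).coeff i) * uu L ^ i)
        = if i = j + m then ((trunc (N + 1) f).coeff i) * ((j + m).choose j : L) else 0 := by
    intro i hi
    rw [Dc_CC_mul, Dc_uu_pow]
    split_ifs <;> simp
  rw [Finset.sum_congr rfl key, Finset.sum_ite_eq']
  by_cases hmem : j + m ∈ (trunc (N + 1) f).support
  · rw [if_pos hmem, PowerSeries.coeff_trunc, if_pos (by omega), mul_comm]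
  · rw [if_neg hmem]
    rw [Polynomial.notMem_support_iff, PowerSeries.coeff_trunc, if_pos (by omega)] at hmem
    rw [hmem, mul_zero]

lemma ev_mul_sub_mem (N : ℕ) (f g : PowerSeries L) :
    ev N (f * g) - ev N f * ev N g ∈ Jid L N := by
  unfold ev
  rw [← Polynomial.eval₂_mul]
  have h1 : trunc (N + 1) (f * g)
      = trunc (N + 1) (((trunc (N + 1) f * trunc (N + 1) g : Polynomial L) : PowerSeries L)) := by
    rw [Polynomial.coe_mul, trunc_trunc_mul_trunc]
  rw [h1, ← Polynomial.eval₂_sub]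
  apply eval₂_mem_Jid
  intro i hi
  rw [Polynomial.coeff_sub, PowerSeries.coeff_trunc, if_pos (by omega),
    Polynomial.coeff_coe, sub_self]

variable (θ : L →+* PowerSeries L) (N : ℕ)

noncomputable def Ahom : L →+* PowerSeries (PowerSeries L) ⧸ Jid L N :=
  (Ideal.Quotient.mk (Jid L N)).comp ((PowerSeries.map θ).comp θ)

noncomputable def Bhom : L →+* PowerSeries (PowerSeries L) ⧸ Jid L N where
  toFun := fun y => Ideal.Quotient.mk (Jid L N) (ev N (θ y))
  map_one' := by
    show Ideal.Quotient.mk (Jid L N) (ev N (θ 1)) = 1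
    rw [map_one]
    unfold ev
    rw [trunc_one, Polynomial.eval₂_one, map_one]
  map_mul' := by
    intro a b
    show Ideal.Quotient.mk (Jid L N) (ev N (θ (a * b)))
      = Ideal.Quotient.mk (Jid L N) (ev N (θ a)) * Ideal.Quotient.mk (Jid L N) (ev N (θ b))
    have h := Ideal.Quotient.eq.mpr (ev_mul_sub_mem N (θ a) (θ b))
    rw [map_mul θ, h, map_mul]
  map_zero' := by
    show Ideal.Quotient.mk (Jid L N) (ev N (θ 0)) = 0
    rw [map_zero]
    unfold ev
    rw [map_zero (trunc (N + 1)), Polynomial.eval₂_zero, map_zero]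
  map_add' := by
    intro a b
    show Ideal.Quotient.mk (Jid L N) (ev N (θ (a + b)))
      = Ideal.Quotient.mk (Jid L N) (ev N (θ a)) + Ideal.Quotient.mk (Jid L N) (ev N (θ b))
    rw [map_add θ]
    unfold ev
    rw [map_add (trunc (N + 1)), Polynomial.eval₂_add, map_add]

lemma AB_iff (y : L) :
    Ahom θ N y = Bhom θ N y ↔ ∀ j m : ℕ, j + m ≤ N →
      hdCoeff θ j (hdCoeff θ m y) = ((j + m).choose j : L) * hdCoeff θ (j + m) y := by
  show Ideal.Quotient.mk _ (PowerSeries.map θ (θ y)) = Ideal.Quotient.mk _ (ev N (θ y)) ↔ _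
  rw [Ideal.Quotient.eq]
  constructor
  · intro h j m hjm
    have h2 := h j m hjm
    rw [Dc_sub, sub_eq_zero] at h2
    have h3 : Dc j m (PowerSeries.map θ (θ y)) = hdCoeff θ j (hdCoeff θ m y) := by
      unfold Dc hdCoeff
      rw [PowerSeries.coeff_map]
    rw [h3, Dc_ev hjm] at h2
    exact h2
  · intro h j m hjm
    rw [Dc_sub, sub_eq_zero]
    have h3 : Dc j m (PowerSeries.map θ (θ y)) = hdCoeff θ j (hdCoeff θ m y) := by
      unfold Dc hdCoeff
      rw [PowerSeries.coeff_map]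
    rw [h3, Dc_ev hjm]
    exact h j m hjm


lemma hd_zero (hθ : IsHigherDerivation θ) (z : L) : hdCoeff θ 0 z = z := by
  unfold hdCoeff
  rw [PowerSeries.coeff_zero_eq_constantCoeff]
  exact hθ z

lemma Dc_map (j m : ℕ) (y : L) :
    Dc j m (PowerSeries.map θ (θ y)) = hdCoeff θ j (hdCoeff θ m y) := by
  unfold Dc hdCoeff
  rw [PowerSeries.coeff_map]

lemma isNilpotent_sub (hθ : IsHigherDerivation θ) (y : L) :
    IsNilpotent (Bhom θ N y - Ahom θ N y) := by
  have heq : Bhom θ N y - Ahom θ N y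
      = Ideal.Quotient.mk (Jid L N) (ev N (θ y) - PowerSeries.map θ (θ y)) := by
    rw [map_sub]
    rfl
  rw [heq]
  refine ⟨N + 1, ?_⟩
  rw [← map_pow, Ideal.Quotient.eq_zero_iff_mem]
  apply pow_mem_Jid
  intro j m h
  have hj : j = 0 := by omega
  have hm : m = 0 := by omega
  subst hj; subst hm
  rw [Dc_sub, Dc_map, Dc_ev (Nat.zero_le N), hd_zero θ hθ, Nat.choose_zero_right,
    Nat.cast_one, one_mul]
  show hdCoeff θ 0 y - hdCoeff θ 0 y = 0
  rw [sub_self]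

lemma hensel_eq {Q : Type*} [CommRing Q] {P : Polynomial Q} {a b : Q}
    (ha : P.eval a = 0) (hb : P.eval b = 0) (hu : IsUnit (P.derivative.eval a))
    (hn : IsNilpotent (b - a)) : a = b := by
  obtain ⟨c, hc⟩ := P.binomExpansion a (b - a)
  rw [add_sub_cancel, hb, ha, zero_add] at hc
  have h2 : (b - a) * (P.derivative.eval a + c * (b - a)) = 0 := by
    linear_combination -hc
  have h3 : IsUnit (P.derivative.eval a + c * (b - a)) := by
    have hnil : IsNilpotent (c * (b - a)) := by
      rw [mul_comm]
      exact (Commute.all (b - a) c).isNilpotent_mul_right hn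
    exact hnil.isUnit_add_left_of_commute hu (Commute.all _ _)
  have h4 : b - a = 0 := (h3.mul_left_eq_zero).mp h2
  rw [← sub_eq_zero, ← neg_sub, h4, neg_zero]

end Stmt9Aux

open Stmt9Aux

/-- let `(F, θF)` be an ID-field of prime characteristic `p` containing an
element `t` with `θF(t) = t + T`, let `L/F` be a finitely generated separable field
extension carrying a higher derivation `θ` extending `θF`, and let `x_1, …, x_k` be a
separating transcendence basis of `L/F`.  Set `ξ_{i,n} := θ^(n)(x_i)` and assume
`ξ_{i,n} ∈ L^p·F` for all `i` and `n ≥ 1` (where `L^p·F` is the subfield of `L`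
generated by `F` and the `p`-th powers of elements of `L`).  Then for any `ℓ₀ ≥ 0`:
the iteration rule `θ^(j)(θ^(m)(y)) = binom(j+m,j)·θ^(j+m)(y)` holds for all
`j, m > 0` with `j + m ≤ p^(ℓ₀+1)` and all `y ∈ L`, if and only if it holds (for the
same range of `j, m`) just for the elements `x_1, …, x_k`. -/
theorem torsion_group_schemes_stmt_9 {F L : Type*} [Field F] [Field L] [Algebra F L]
    (p : ℕ) [Fact p.Prime] [CharP F p]
    (θF : F →+* PowerSeries F) (hθF : IsIterativeDerivation θF)
    (t : F) (ht : θF t = PowerSeries.C (R := F) t + PowerSeries.X)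
    (θ : L →+* PowerSeries L) (hθ : IsHigherDerivation θ)
    (hext : ∀ a : F, θ (algebraMap F L a) = PowerSeries.map (algebraMap F L) (θF a))
    (k : ℕ) (x : Fin k → L) (hx : AlgebraicIndependent F x)
    (hfin : FiniteDimensional (IntermediateField.adjoin F (Set.range x)) L)
    (hsep : Algebra.IsSeparable (IntermediateField.adjoin F (Set.range x)) L)
    (hξ : ∀ i : Fin k, ∀ n : ℕ, 1 ≤ n →
      hdCoeff θ n (x i) ∈
        Subfield.closure (Set.range (algebraMap F L) ∪ {a : L | ∃ y : L, a = y ^ p}))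
    (ℓ₀ : ℕ) :
    (∀ j m : ℕ, 0 < j → 0 < m → j + m ≤ p ^ (ℓ₀ + 1) → ∀ y : L,
        hdCoeff θ j (hdCoeff θ m y) = ((j + m).choose j : L) * hdCoeff θ (j + m) y)
    ↔
    (∀ i : Fin k, ∀ j m : ℕ, 0 < j → 0 < m → j + m ≤ p ^ (ℓ₀ + 1) →
        hdCoeff θ j (hdCoeff θ m (x i)) =
          ((j + m).choose j : L) * hdCoeff θ (j + m) (x i)) := by
  classical
  set N := p ^ (ℓ₀ + 1) with hN
  constructor
  · intro h i j m hj hm hle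
    exact h j m hj hm hle (x i)
  · intro h3
    have crit : ∀ y : L, (Ahom θ N y = Bhom θ N y) ↔
        ∀ j m : ℕ, j + m ≤ N →
          hdCoeff θ j (hdCoeff θ m y) = ((j + m).choose j : L) * hdCoeff θ (j + m) y :=
      fun y => AB_iff θ N y
    have triv : ∀ y : L, (∀ j m : ℕ, 0 < j → 0 < m → j + m ≤ N →
          hdCoeff θ j (hdCoeff θ m y) = ((j + m).choose j : L) * hdCoeff θ (j + m) y) →
        ∀ j m : ℕ, j + m ≤ N →
          hdCoeff θ j (hdCoeff θ m y) = ((j + m).choose j : L) * hdCoeff θ (j + m) y := by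
      intro y hy j m hjm
      rcases Nat.eq_zero_or_pos j with rfl | hj
      · rw [hd_zero θ hθ, Nat.zero_add, Nat.choose_zero_right, Nat.cast_one, one_mul]
      rcases Nat.eq_zero_or_pos m with rfl | hm
      · rw [hd_zero θ hθ y, Nat.add_zero, Nat.choose_self, Nat.cast_one, one_mul]
      exact hy j m hj hm hjm
    let E : IntermediateField F L := {
      carrier := {y : L | Ahom θ N y = Bhom θ N y}
      mul_mem' := by
        intro a b ha hb
        simp only [Set.mem_setOf_eq, map_mul] at *
        rw [ha, hb]
      one_mem' := by
        simp only [Set.mem_setOf_eq, map_one]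
      add_mem' := by
        intro a b ha hb
        simp only [Set.mem_setOf_eq, map_add] at *
        rw [ha, hb]
      zero_mem' := by
        simp only [Set.mem_setOf_eq, map_zero]
      algebraMap_mem' := by
        intro a
        show Ahom θ N (algebraMap F L a) = Bhom θ N (algebraMap F L a)
        refine (crit _).mpr fun j m hjm => ?_
        have hcoef : ∀ (n : ℕ) (b : F),
            hdCoeff θ n (algebraMap F L b) = algebraMap F L (hdCoeff θF n b) := by
          intro n b
          unfold hdCoeff
          rw [hext, PowerSeries.coeff_map]
        rw [hcoef m a, hcoef j _, hθF.2 j m a, map_mul, map_natCast, ← hcoef (j + m) a]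
      inv_mem' := by
        intro a ha
        simp only [Set.mem_setOf_eq] at *
        rcases eq_or_ne a 0 with rfl | h
        · rw [inv_zero, map_zero, map_zero]
        · have h1 : Ahom θ N a⁻¹ * Ahom θ N a = 1 := by
            rw [← map_mul, inv_mul_cancel₀ h, map_one]
          have h2 : Ahom θ N a * Bhom θ N a⁻¹ = 1 := by
            rw [ha, ← map_mul, mul_inv_cancel₀ h, map_one]
          calc Ahom θ N a⁻¹ = Ahom θ N a⁻¹ * (Ahom θ N a * Bhom θ N a⁻¹) := by
                rw [h2, mul_one]
            _ = (Ahom θ N a⁻¹ * Ahom θ N a) * Bhom θ N a⁻¹ := by ring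
            _ = Bhom θ N a⁻¹ := by rw [h1, one_mul] }
    have hxE : ∀ i, x i ∈ E := fun i =>
      (crit (x i)).mpr (triv (x i) (fun j m hj hm hle => h3 i j m hj hm hle))
    have hKE : IntermediateField.adjoin F (Set.range x) ≤ E :=
      IntermediateField.adjoin_le_iff.mpr (Set.range_subset_iff.mpr hxE)
    have hall : ∀ y : L, Ahom θ N y = Bhom θ N y := by
      intro y
      set K' := IntermediateField.adjoin F (Set.range x) with hK'
      set f := minpoly K' y with hf
      have hsepf : f.Separable := Algebra.IsSeparable.isSeparable K' y
      set g := f.map (algebraMap K' L) with hg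
      have hgy : g.eval y = 0 := by
        rw [hg, Polynomial.eval_map, ← Polynomial.aeval_def]
        exact minpoly.aeval K' y
      have hgd : g.derivative.eval y ≠ 0 := by
        rw [hg, Polynomial.derivative_map, Polynomial.eval_map, ← Polynomial.aeval_def]
        exact hsepf.aeval_derivative_ne_zero (minpoly.aeval K' y)
      have hmapAB : g.map (Ahom θ N) = g.map (Bhom θ N) := by
        ext n
        simp only [Polynomial.coeff_map]
        have hmem : g.coeff n ∈ E := by
          rw [hg, Polynomial.coeff_map]
          exact hKE (f.coeff n).2
        exact hmem
      have hA : (g.map (Ahom θ N)).eval (Ahom θ N y) = 0 := by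
        rw [Polynomial.eval_map, Polynomial.eval₂_at_apply, hgy, map_zero]
      have hB : (g.map (Ahom θ N)).eval (Bhom θ N y) = 0 := by
        rw [hmapAB, Polynomial.eval_map, Polynomial.eval₂_at_apply, hgy, map_zero]
      have hunit : IsUnit ((g.map (Ahom θ N)).derivative.eval (Ahom θ N y)) := by
        rw [Polynomial.derivative_map, Polynomial.eval_map, Polynomial.eval₂_at_apply]
        exact IsUnit.of_mul_eq_one (Ahom θ N (g.derivative.eval y)⁻¹)
          (by rw [← map_mul, mul_inv_cancel₀ hgd, map_one])
      exact hensel_eq hA hB hunit (isNilpotent_sub θ N hθ y)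
    intro j m hj hm hle y
    exact (crit y).mp (hall y) j m hle
end

section
/- Let L be a field of characteristic 2, let x, z ∈ L satisfy z² + z = x³ with x ≠ 0 (so that z ∉ {0,1} and 1 + z ≠ 0), and let θ be a higher derivation on L. The power series θ(x) + x/(1+z) ∈ L[[T]] has constant term x·z/(1+z) ≠ 0 and hence is invertible in L[[T]]; define h := (θ(z) + z/(1+z))·(θ(x) + x/(1+z))^{-1} ∈ L[[T]] and f := θ(x) + x/(1+z) + h² ∈ L[[T]], with coefficients f = Σ_m f_m T^m, h = Σ_m h_m T^m, and set ξ_m := θ^(m)(x). Then: (i) f₀ = 0; (ii) f_m = ξ_m for all odd m, and f_m = ξ_m + (h_{m/2})² for all even m > 0; (iii) there is a unique power series g ∈ L[[T]] with constant coefficient g₀ = 0 satisfying f³ = g² + g, and this g moreover satisfies g₁ = g₂ = 0. -/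
open PowerSeries Finset

section helpers
variable {L : Type*} [Field L] [CharP L 2]

lemma aux_coeff_sq (φ : PowerSeries L) (n : ℕ) :
    coeff n (φ ^ 2) = if Even n then (coeff (n / 2) φ) ^ 2 else 0 := by
  rw [sq, PowerSeries.coeff_mul, Finset.Nat.sum_antidiagonal_eq_sum_range_succ_mk]
  by_cases hn : Even n
  · obtain ⟨k, hk⟩ := hn
    have hkmem : k ∈ Finset.range (n + 1) := by
      simp only [Finset.mem_range]; omega
    rw [← Finset.add_sum_erase _ _ hkmem]
    have hsum : ∑ i ∈ (Finset.range (n+1)).erase k,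
        coeff i φ * coeff (n - i) φ = 0 := by
      apply Finset.sum_involution (fun i _ => n - i)
      · intro i hi
        simp only [Finset.mem_erase, Finset.mem_range] at hi
        have : n - (n - i) = i := by omega
        rw [this, mul_comm]
        exact CharTwo.add_self_eq_zero _
      · intro i hi _
        simp only [Finset.mem_erase, Finset.mem_range] at hi
        omega
      · intro i hi
        simp only [Finset.mem_erase, Finset.mem_range] at hi ⊢
        omega
      · intro i hi
        simp only [Finset.mem_erase, Finset.mem_range] at hi
        omega
    rw [hsum, add_zero, if_pos ⟨k, hk⟩]
    have h1 : n - k = k := by omega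
    have h2 : n / 2 = k := by omega
    rw [h1, h2, sq]
  · rw [if_neg hn]
    apply Finset.sum_involution (fun i _ => n - i)
    · intro i hi
      simp only [Finset.mem_range] at hi
      have : n - (n - i) = i := by omega
      rw [this, mul_comm]
      exact CharTwo.add_self_eq_zero _
    · intro i hi _
      simp only [Finset.mem_range] at hi
      intro h
      exact hn ⟨i, by omega⟩
    · intro i hi
      simp only [Finset.mem_range] at hi ⊢
      omega
    · intro i hi
      simp only [Finset.mem_range] at hi
      omega

noncomputable def gauxHD (F : ℕ → L) : ℕ → L
  | 0 => 0
  | n + 1 => F (n + 1) + (if Even (n + 1) then (gauxHD F ((n + 1) / 2)) ^ 2 else 0)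
  decreasing_by exact Nat.div_lt_self (Nat.succ_pos n) one_lt_two

omit [CharP L 2] in
lemma gauxHD_pos (F : ℕ → L) (n : ℕ) (hn : 0 < n) :
    gauxHD F n = F n + (if Even n then (gauxHD F (n / 2)) ^ 2 else 0) := by
  obtain ⟨m, rfl⟩ := Nat.exists_eq_succ_of_ne_zero hn.ne'
  rw [gauxHD]

lemma add2_cancel (a b : L) : a + (b + a) = b := by
  rw [add_comm b a, ← add_assoc, CharTwo.add_self_eq_zero, zero_add]

end helpers

/-- let `L` be a field of characteristic `2`, `x, z ∈ L` with
`z² + z = x³` and `x ≠ 0`, and `θ` a higher derivation on `L`.  The series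
`θ(x) + x/(1+z)` has constant term `x·z/(1+z) ≠ 0`, hence is invertible in `L[[T]]`;
with `h := (θ(z)+z/(1+z))·(θ(x)+x/(1+z))⁻¹` and `f := θ(x)+x/(1+z)+h²` (so that
`(f, g)` is the coordinate expression of `η_L ⊖ θ_*(η_L)` on the curve `x³ = z²+z`),
one has: (i) `f₀ = 0`; (ii) `f_m = ξ_m` for odd `m` and `f_m = ξ_m + (h_{m/2})²` for
even `m > 0` (where `ξ_m = θ^(m)(x)`); (iii) there is a unique `g ∈ L[[T]]` with
`g₀ = 0` and `f³ = g² + g`, and it satisfies `g₁ = g₂ = 0`. -/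
theorem torsion_group_schemes_stmt_12 {L : Type*} [Field L] [CharP L 2]
    (x z : L) (hzx : z ^ 2 + z = x ^ 3) (hx : x ≠ 0)
    (θ : L →+* PowerSeries L) (hθ : IsHigherDerivation θ) :
    (1 + z ≠ 0) ∧
    constantCoeff (θ x + PowerSeries.C (x / (1 + z))) = x * z / (1 + z) ∧
    x * z / (1 + z) ≠ 0 ∧
    IsUnit (θ x + PowerSeries.C (x / (1 + z))) ∧
    (let h : PowerSeries L :=
        (θ z + PowerSeries.C (z / (1 + z))) * (θ x + PowerSeries.C (x / (1 + z)))⁻¹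
     let f : PowerSeries L := θ x + PowerSeries.C (x / (1 + z)) + h ^ 2
     constantCoeff f = 0 ∧
     (∀ m : ℕ, Odd m → coeff m f = coeff m (θ x)) ∧
     (∀ m : ℕ, Even m → 0 < m →
        coeff m f = coeff m (θ x) + (coeff (m / 2) h) ^ 2) ∧
     (∃! g : PowerSeries L, constantCoeff g = 0 ∧ f ^ 3 = g ^ 2 + g) ∧
     (∀ g : PowerSeries L, constantCoeff g = 0 → f ^ 3 = g ^ 2 + g →
        coeff 1 g = 0 ∧ coeff 2 g = 0)) := by
  have h2 : (2 : L) = 0 := CharTwo.two_eq_zero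
  have hz : z ≠ 0 := by
    rintro rfl
    apply hx
    have : x ^ 3 = 0 := by rw [← hzx]; ring
    exact pow_eq_zero_iff (by norm_num) |>.mp this
  have h1z : 1 + z ≠ 0 := by
    intro h
    have hz1 : z = -1 := by linear_combination h
    apply hx
    have : x ^ 3 = 0 := by rw [← hzx, hz1]; ring
    exact pow_eq_zero_iff (by norm_num) |>.mp this
  have hcc : constantCoeff (θ x + PowerSeries.C (x / (1 + z))) = x * z / (1 + z) := by
    rw [map_add, hθ x, PowerSeries.constantCoeff_C]
    field_simp
    linear_combination h2
  have hne : x * z / (1 + z) ≠ 0 := div_ne_zero (mul_ne_zero hx hz) h1z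
  have hunit : IsUnit (θ x + PowerSeries.C (x / (1 + z))) := by
    rw [PowerSeries.isUnit_iff_constantCoeff, hcc]
    exact isUnit_iff_ne_zero.mpr hne
  refine ⟨h1z, hcc, hne, hunit, ?_⟩
  intro h f
  -- constant coefficient of h
  have hinv : constantCoeff (θ x + PowerSeries.C (x / (1 + z)))⁻¹ = (x * z / (1 + z))⁻¹ := by
    rw [PowerSeries.constantCoeff_inv, hcc]
  have hccz : constantCoeff (θ z + PowerSeries.C (z / (1 + z))) = z + z / (1 + z) := by
    rw [map_add, hθ z, PowerSeries.constantCoeff_C]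
  have hh0 : constantCoeff h = z / x := by
    show constantCoeff ((θ z + PowerSeries.C (z / (1 + z))) *
      (θ x + PowerSeries.C (x / (1 + z)))⁻¹) = z / x
    rw [map_mul, hccz, hinv]
    field_simp
    linear_combination h2
  have hf0 : constantCoeff f = 0 := by
    show constantCoeff (θ x + PowerSeries.C (x / (1 + z)) + h ^ 2) = 0
    rw [map_add, hcc, map_pow, hh0]
    field_simp
    linear_combination (x^2*z) * hzx + (x^3*z + z^2*(1+z)) * h2 - (x^2*z+z)*hzx - x^3*z*h2
  have hodd : ∀ m : ℕ, Odd m → coeff m f = coeff m (θ x) := by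
    intro m hm
    have hm' := Nat.odd_iff.mp hm
    show coeff m (θ x + PowerSeries.C (x / (1 + z)) + h ^ 2) = coeff m (θ x)
    rw [map_add, map_add, aux_coeff_sq, PowerSeries.coeff_C, if_neg, if_neg, add_zero, add_zero]
    · intro he; have := Nat.even_iff.mp he; omega
    · omega
  have heven : ∀ m : ℕ, Even m → 0 < m →
      coeff m f = coeff m (θ x) + (coeff (m / 2) h) ^ 2 := by
    intro m hm hm0
    show coeff m (θ x + PowerSeries.C (x / (1 + z)) + h ^ 2) = _
    rw [map_add, map_add, aux_coeff_sq, if_pos hm, PowerSeries.coeff_C, if_neg hm0.ne',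
      add_zero]
  -- coefficients of f^3 below degree 3 vanish
  have hlt : ∀ m < 3, coeff m (f ^ 3) = 0 :=
    PowerSeries.X_pow_dvd_iff.mp
      (pow_dvd_pow_of_dvd (PowerSeries.X_dvd_iff.mpr hf0) 3)
  -- uniqueness of solutions of g^2 + g = f^3 with zero constant term
  have huniq : ∀ g1 g2 : PowerSeries L, constantCoeff g1 = 0 → f ^ 3 = g1 ^ 2 + g1 →
      constantCoeff g2 = 0 → f ^ 3 = g2 ^ 2 + g2 → g1 = g2 := by
    intro g1 g2 hc1 he1 hc2 he2
    have key : ∀ n : ℕ, coeff n g1 = coeff n g2 := by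
      intro n
      induction n using Nat.strong_induction_on with
      | _ n ih =>
        match n with
        | 0 =>
          rw [coeff_zero_eq_constantCoeff, hc1, hc2]
        | (m + 1) =>
          have e1 := congrArg (coeff (m + 1)) he1
          have e2 := congrArg (coeff (m + 1)) he2
          rw [map_add, aux_coeff_sq] at e1 e2
          have hkey : (if Even (m+1) then (coeff ((m+1)/2) g1) ^ 2 else 0)
              = (if Even (m+1) then (coeff ((m+1)/2) g2) ^ 2 else 0) := by
            by_cases hev : Even (m + 1)
            · rw [if_pos hev, if_pos hev,
                ih ((m+1)/2) (Nat.div_lt_self (Nat.succ_pos m) one_lt_two)]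
            · rw [if_neg hev, if_neg hev]
          have e3 := e1.symm.trans e2
          rw [hkey] at e3
          exact add_left_cancel e3
    exact PowerSeries.ext key
  -- existence
  set F : ℕ → L := fun n => coeff n (f ^ 3) with hF
  set g0 : PowerSeries L := PowerSeries.mk (gauxHD F) with hg0
  have hg00 : constantCoeff g0 = 0 := by
    rw [hg0, ← coeff_zero_eq_constantCoeff_apply, coeff_mk]
    rw [gauxHD]
  have heq : f ^ 3 = g0 ^ 2 + g0 := by
    ext n
    rw [map_add, aux_coeff_sq, hg0, coeff_mk]
    simp only [coeff_mk]
    match n with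
    | 0 =>
      rw [gauxHD]
      simp only [Nat.zero_div, Even.zero, if_pos, gauxHD]
      have : coeff 0 (f ^ 3) = 0 := hlt 0 (by norm_num)
      rw [this]
      norm_num
    | (m + 1) =>
      rw [gauxHD_pos F (m + 1) (Nat.succ_pos m)]
      exact (add2_cancel _ _).symm
  refine ⟨hf0, hodd, heven, ⟨g0, ⟨hg00, heq⟩, fun g' hg' => huniq g' g0 hg'.1 hg'.2 hg00 heq⟩,
    ?_⟩
  intro g hgc hge
  have e1 := congrArg (coeff 1) hge
  have e2 := congrArg (coeff 2) hge
  rw [hlt 1 (by norm_num), map_add, aux_coeff_sq] at e1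
  rw [hlt 2 (by norm_num), map_add, aux_coeff_sq] at e2
  simp only [Nat.not_even_one, if_neg, if_false, zero_add] at e1
  have hg1 : coeff 1 g = 0 := e1.symm
  refine ⟨hg1, ?_⟩
  simp only [if_pos, even_two] at e2
  rw [show (2:ℕ)/2 = 1 from rfl, hg1] at e2
  have : (0:L) = 0 ^ 2 + coeff 2 g := e2
  simpa using this.symm
end

section
/- Let L be a field of characteristic 2, let x, z ∈ L satisfy z² + z = x³ with x ≠ 0 (so 1 + z ≠ 0), and let θ be an iterative derivation on L. Define h := (θ(z) + z/(1+z))·(θ(x) + x/(1+z))^{-1} ∈ L[[T]] (the series θ(x) + x/(1+z) has nonzero constant term x·z/(1+z), hence is invertible) and f := θ(x) + x/(1+z) + h² ∈ L[[T]], with coefficients f = Σ_m f_m T^m. Then for all m, j ≥ 1 such that m and j are not both even, one has θ^(m)(f_j) = binom(m+j, m)·f_{m+j}. -/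
open PowerSeries

namespace TorsionAux

open Finset

variable {R : Type*} [CommRing R]

/-- The underlying function of the substitution `T ↦ T + S`:
`g(T) ↦ g(T+S)` viewed in `R[[S]][[T]]` (outer variable is the original one). -/
noncomputable def hshiftFun (g : PowerSeries R) : PowerSeries (PowerSeries R) :=
  PowerSeries.mk fun j => PowerSeries.mk fun m =>
    ((m + j).choose j : R) * PowerSeries.coeff (m + j) g

theorem coeff_hshiftFun (g : PowerSeries R) (j m : ℕ) :
    PowerSeries.coeff m (PowerSeries.coeff j (hshiftFun g)) =
      ((m + j).choose j : R) * PowerSeries.coeff (m + j) g := by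
  simp [hshiftFun]

theorem hshiftFun_mul (g h : PowerSeries R) :
    hshiftFun (g * h) = hshiftFun g * hshiftFun h := by
  refine PowerSeries.ext fun j => PowerSeries.ext fun m => ?_
  rw [coeff_hshiftFun]
  conv_rhs => rw [PowerSeries.coeff_mul]
  rw [map_sum]
  -- rewrite each summand of the RHS as a double sum
  have hR : ∀ p : ℕ × ℕ, p ∈ antidiagonal j →
      PowerSeries.coeff m
        (PowerSeries.coeff p.1 (hshiftFun g) *
          PowerSeries.coeff p.2 (hshiftFun h)) =
      ∑ q ∈ antidiagonal m,
        (((q.1 + p.1).choose p.1 : R) * PowerSeries.coeff (q.1 + p.1) g) *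
          (((q.2 + p.2).choose p.2 : R) * PowerSeries.coeff (q.2 + p.2) h) := by
    intro p _
    rw [PowerSeries.coeff_mul]
    refine Finset.sum_congr rfl fun q _ => ?_
    rw [coeff_hshiftFun, coeff_hshiftFun]
  rw [Finset.sum_congr rfl hR]
  -- now compare with the Hasse derivative identity for truncations
  set N := m + j + 1 with hN
  have key := congrArg (fun P : Polynomial R => P.coeff m)
    (Polynomial.hasseDeriv_mul (k := j) (PowerSeries.trunc N g) (PowerSeries.trunc N h))
  simp only [Polynomial.hasseDeriv_coeff, Polynomial.coeff_mul,
    Polynomial.finset_sum_coeff] at key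
  have lhs_eq : ((m + j).choose j : R) * PowerSeries.coeff (m + j) (g * h) =
      ((m + j).choose j : R) * ∑ p ∈ antidiagonal (m + j),
        (PowerSeries.trunc N g).coeff p.1 * (PowerSeries.trunc N h).coeff p.2 := by
    rw [PowerSeries.coeff_mul]
    congr 1
    refine Finset.sum_congr rfl fun p hp => ?_
    rw [Finset.HasAntidiagonal.mem_antidiagonal] at hp
    rw [PowerSeries.coeff_trunc, PowerSeries.coeff_trunc, if_pos (by omega), if_pos (by omega)]
  have rhs_eq : (∑ p ∈ antidiagonal j, ∑ q ∈ antidiagonal m,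
      ((((q.1 + p.1).choose p.1 : R)) * (PowerSeries.trunc N g).coeff (q.1 + p.1)) *
        ((((q.2 + p.2).choose p.2 : R)) * (PowerSeries.trunc N h).coeff (q.2 + p.2))) =
      ∑ p ∈ antidiagonal j, ∑ q ∈ antidiagonal m,
        (((q.1 + p.1).choose p.1 : R) * PowerSeries.coeff (q.1 + p.1) g) *
          (((q.2 + p.2).choose p.2 : R) * PowerSeries.coeff (q.2 + p.2) h) := by
    refine Finset.sum_congr rfl fun p hp => Finset.sum_congr rfl fun q hq => ?_
    rw [Finset.HasAntidiagonal.mem_antidiagonal] at hp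
    rw [Finset.HasAntidiagonal.mem_antidiagonal] at hq
    rw [PowerSeries.coeff_trunc, PowerSeries.coeff_trunc, if_pos (by omega), if_pos (by omega)]
  rw [lhs_eq, key, ← rhs_eq]

/-- Substitution `T ↦ T + S` as a ring homomorphism `R[[T]] → R[[S]][[T]]`. -/
noncomputable def hshift (R : Type*) [CommRing R] :
    PowerSeries R →+* PowerSeries (PowerSeries R) where
  toFun := hshiftFun
  map_one' := by
    refine PowerSeries.ext fun j => PowerSeries.ext fun m => ?_
    rw [coeff_hshiftFun]
    by_cases hj0 : j = 0 <;> by_cases hm0 : m = 0 <;>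
      simp [hj0, hm0, PowerSeries.coeff_one, Nat.add_eq_zero]
  map_mul' := hshiftFun_mul
  map_zero' := by
    refine PowerSeries.ext fun j => PowerSeries.ext fun m => ?_
    rw [coeff_hshiftFun]
    simp
  map_add' g h := by
    refine PowerSeries.ext fun j => PowerSeries.ext fun m => ?_
    rw [coeff_hshiftFun]
    simp only [map_add, coeff_hshiftFun]
    ring

theorem coeff_hshift (g : PowerSeries R) (j m : ℕ) :
    PowerSeries.coeff m (PowerSeries.coeff j (hshift R g)) =
      ((m + j).choose j : R) * PowerSeries.coeff (m + j) g :=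
  coeff_hshiftFun g j m

theorem hshift_C (c : R) :
    hshift R (PowerSeries.C c) = PowerSeries.C (PowerSeries.C c) := by
  refine PowerSeries.ext fun j => PowerSeries.ext fun m => ?_
  rw [coeff_hshift, PowerSeries.coeff_C, PowerSeries.coeff_C]
  rcases Nat.eq_zero_or_pos j with hj | hj
  · subst hj
    rcases Nat.eq_zero_or_pos m with hm | hm
    · subst hm; simp
    · rw [if_pos rfl, PowerSeries.coeff_C, if_neg (by omega), if_neg (by omega), mul_zero]
  · rw [if_neg (by omega), if_neg (by omega), mul_zero, map_zero]

/-- In characteristic two, squares in a power series ring have no odd coefficients. -/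
theorem coeff_sq_odd {R : Type*} [CommRing R] (h2 : (2 : R) = 0)
    (Q : PowerSeries R) {n : ℕ} (hn : ¬ Even n) :
    PowerSeries.coeff n (Q ^ 2) = 0 := by
  rw [sq, PowerSeries.coeff_mul]
  refine Finset.sum_involution (fun p _ => p.swap) ?_ ?_ ?_ ?_
  · intro p _
    show PowerSeries.coeff p.1 Q * PowerSeries.coeff p.2 Q +
        PowerSeries.coeff p.2 Q * PowerSeries.coeff p.1 Q = 0
    linear_combination (PowerSeries.coeff p.1 Q * PowerSeries.coeff p.2 Q) * h2
  · intro p hp _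
    rw [Finset.HasAntidiagonal.mem_antidiagonal] at hp
    intro hswap
    have h1 : p.2 = p.1 := congrArg Prod.fst hswap
    exact hn ⟨p.1, by omega⟩
  · intro p hp
    rw [Finset.HasAntidiagonal.mem_antidiagonal] at hp ⊢
    simpa [add_comm] using hp
  · intro p _
    simp

theorem coeff_sq_even {R : Type*} [CommRing R] (h2 : (2 : R) = 0)
    (Q : PowerSeries R) (k : ℕ) :
    PowerSeries.coeff (k + k) (Q ^ 2) = (PowerSeries.coeff k Q) ^ 2 := by
  classical
  rw [sq, PowerSeries.coeff_mul]
  have hmem : ((k, k) : ℕ × ℕ) ∈ antidiagonal (k + k) := by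
    rw [Finset.HasAntidiagonal.mem_antidiagonal]
  rw [← Finset.add_sum_erase _ _ hmem]
  have hzero : (∑ p ∈ (antidiagonal (k + k)).erase (k, k),
      PowerSeries.coeff p.1 Q * PowerSeries.coeff p.2 Q) = 0 := by
    refine Finset.sum_involution (fun p _ => p.swap) ?_ ?_ ?_ ?_
    · intro p _
      show PowerSeries.coeff p.1 Q * PowerSeries.coeff p.2 Q +
          PowerSeries.coeff p.2 Q * PowerSeries.coeff p.1 Q = 0
      linear_combination (PowerSeries.coeff p.1 Q * PowerSeries.coeff p.2 Q) * h2
    · intro p hp _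
      rw [Finset.mem_erase, Finset.HasAntidiagonal.mem_antidiagonal] at hp
      intro hswap
      have h1 : p.2 = p.1 := congrArg Prod.fst hswap
      refine hp.1 ?_
      have hpk : p.1 = k := by omega
      exact Prod.ext hpk (by omega)
    · intro p hp
      rw [Finset.mem_erase, Finset.HasAntidiagonal.mem_antidiagonal] at hp
      rw [Finset.mem_erase, Finset.HasAntidiagonal.mem_antidiagonal]
      refine ⟨?_, by simpa [add_comm] using hp.2⟩
      intro hswap
      apply hp.1
      have h1 : p.1 = k := by
        have := congrArg Prod.snd hswap
        simpa using this
      have h2' : p.2 = k := by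
        have := congrArg Prod.fst hswap
        simpa using this
      exact Prod.ext h1 h2'
    · intro p _
      simp
  rw [hzero, add_zero, sq]

/-- The purely algebraic master identity, in characteristic two. -/
theorem master_alg {B : Type*} [CommRing B] (h2 : (2 : B) = 0)
    (Fθ Fσ U V A Bb P1 P2 : B)
    (G1 : Fθ * (U + A) ^ 2 = (U + A) ^ 3 + (V + Bb) ^ 2)
    (G2 : Fσ * U ^ 2 = U ^ 3 + V ^ 2)
    (one1 : (U + A) * P1 = 1) (one2 : U * P2 = 1) :
    Fθ = Fσ + A + ((Bb * U + A * V) * (P1 * P2)) ^ 2 := by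
  have key : ((U + A) ^ 3 + (V + Bb) ^ 2) * U ^ 2 =
      (U ^ 3 + V ^ 2) * (U + A) ^ 2 + A * ((U + A) * U) ^ 2 + (Bb * U + A * V) ^ 2 := by
    linear_combination (U ^ 2 * V * Bb - U * V ^ 2 * A - U * V * A * Bb - V ^ 2 * A ^ 2) * h2
  have hQ : ((Bb * U + A * V) * (P1 * P2)) ^ 2 * ((U + A) ^ 2 * U ^ 2) =
      (Bb * U + A * V) ^ 2 := by
    have e : ((Bb * U + A * V) * (P1 * P2)) ^ 2 * ((U + A) ^ 2 * U ^ 2) =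
        (Bb * U + A * V) ^ 2 * (((U + A) * P1) * (U * P2)) ^ 2 := by ring
    rw [e, one1, one2]; ring
  have h1 : Fθ * ((U + A) ^ 2 * U ^ 2) =
      (Fσ + A + ((Bb * U + A * V) * (P1 * P2)) ^ 2) * ((U + A) ^ 2 * U ^ 2) := by
    linear_combination U ^ 2 * G1 - (U + A) ^ 2 * G2 - hQ + key
  have hXY : ((U + A) * P1) * (U * P2) = 1 := by rw [one1, one2, mul_one]
  calc Fθ = Fθ * (((U + A) * P1) * (U * P2)) ^ 2 := by rw [hXY]; ring
    _ = (Fθ * ((U + A) ^ 2 * U ^ 2)) * (P1 * P2) ^ 2 := by ring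
    _ = ((Fσ + A + ((Bb * U + A * V) * (P1 * P2)) ^ 2) * ((U + A) ^ 2 * U ^ 2)) *
          (P1 * P2) ^ 2 := by rw [h1]
    _ = (Fσ + A + ((Bb * U + A * V) * (P1 * P2)) ^ 2) *
          (((U + A) * P1) * (U * P2)) ^ 2 := by ring
    _ = Fσ + A + ((Bb * U + A * V) * (P1 * P2)) ^ 2 := by rw [hXY]; ring

/-- The main computation, with all series replaced by opaque variables. -/
theorem main {L : Type*} [Field L] (θ : L →+* PowerSeries L)
    (hθ : IsIterativeDerivation θ) (h2L : (2 : L) = 0)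
    (cx cz xx zz : L) (u v F : PowerSeries L)
    (hu : u = θ xx + PowerSeries.C cx) (hv : v = θ zz + PowerSeries.C cz)
    (hcu : PowerSeries.constantCoeff u ≠ 0)
    (hF : F = u + (v * u⁻¹) ^ 2)
    (m j : ℕ) (hj : 1 ≤ j) (hmj : ¬ (Even m ∧ Even j)) :
    hdCoeff θ m (PowerSeries.coeff j F) =
      ((m + j).choose m : L) * PowerSeries.coeff (m + j) F := by
  have h2P : (2 : PowerSeries L) = 0 := by
    rw [← map_ofNat (PowerSeries.C (R := L)) 2, h2L, map_zero]
  have h2B : (2 : PowerSeries (PowerSeries L)) = 0 := by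
    rw [← map_ofNat (PowerSeries.C (R := PowerSeries L)) 2, h2P, map_zero]
  have huinv : u * u⁻¹ = 1 := PowerSeries.mul_inv_cancel u hcu
  have I1 : F * u ^ 2 = u ^ 3 + v ^ 2 := by
    rw [hF]
    linear_combination (v ^ 2 * (u * u⁻¹ + 1)) * huinv
  -- iterativity: hshift agrees with map θ on elements of the form θ r
  have hshift_theta : ∀ r : L, hshift L (θ r) = PowerSeries.map θ (θ r) := by
    intro r
    refine PowerSeries.ext fun j' => PowerSeries.ext fun m' => ?_
    rw [coeff_hshift, PowerSeries.coeff_map]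
    have hiter := hθ.2 m' j' r
    unfold hdCoeff at hiter
    rw [hiter, ← Nat.choose_symm_add]
  have eu : PowerSeries.map θ u =
      hshift L u + PowerSeries.C (θ cx - PowerSeries.C cx) := by
    rw [hu, map_add, map_add, PowerSeries.map_C, hshift_C, hshift_theta xx, map_sub]
    ring
  have ev : PowerSeries.map θ v =
      hshift L v + PowerSeries.C (θ cz - PowerSeries.C cz) := by
    rw [hv, map_add, map_add, PowerSeries.map_C, hshift_C, hshift_theta zz, map_sub]
    ring
  have G1 : PowerSeries.map θ F *
      (hshift L u + PowerSeries.C (θ cx - PowerSeries.C cx)) ^ 2 =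
      (hshift L u + PowerSeries.C (θ cx - PowerSeries.C cx)) ^ 3 +
      (hshift L v + PowerSeries.C (θ cz - PowerSeries.C cz)) ^ 2 := by
    have h3 := congrArg (PowerSeries.map θ) I1
    rw [map_mul, map_pow, map_add, map_pow, map_pow, eu, ev] at h3
    exact h3
  have G2 : hshift L F * (hshift L u) ^ 2 = (hshift L u) ^ 3 + (hshift L v) ^ 2 := by
    have h3 := congrArg (hshift L) I1
    rw [map_mul, map_pow, map_add, map_pow, map_pow] at h3
    exact h3
  have one1 : (hshift L u + PowerSeries.C (θ cx - PowerSeries.C cx)) *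
      PowerSeries.map θ u⁻¹ = 1 := by
    have h3 := congrArg (PowerSeries.map θ) huinv
    rw [map_mul, map_one, eu] at h3
    exact h3
  have one2 : hshift L u * hshift L u⁻¹ = 1 := by
    have h3 := congrArg (hshift L) huinv
    rw [map_mul, map_one] at h3
    exact h3
  have master := master_alg h2B (PowerSeries.map θ F) (hshift L F)
    (hshift L u) (hshift L v)
    (PowerSeries.C (θ cx - PowerSeries.C cx))
    (PowerSeries.C (θ cz - PowerSeries.C cz))
    (PowerSeries.map θ u⁻¹) (hshift L u⁻¹) G1 G2 one1 one2
  -- extract coefficients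
  show PowerSeries.coeff m (θ (PowerSeries.coeff j F)) = _
  rw [← PowerSeries.coeff_map θ j F, master, map_add, map_add, map_add, map_add]
  have hCa0 : PowerSeries.coeff j
      (PowerSeries.C (θ cx - PowerSeries.C cx)) = 0 := by
    rw [PowerSeries.coeff_C, if_neg (by omega)]
  have hQ0 : PowerSeries.coeff m (PowerSeries.coeff j
      ((((PowerSeries.C (θ cz - PowerSeries.C cz)) * hshift L u +
        (PowerSeries.C (θ cx - PowerSeries.C cx)) * hshift L v) *
        (PowerSeries.map θ u⁻¹ * hshift L u⁻¹)) ^ 2)) = 0 := by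
    rcases Nat.even_or_odd j with hje | hjo
    · obtain ⟨k, hk⟩ := hje
      have hmodd : ¬ Even m := fun hme => hmj ⟨hme, ⟨k, hk⟩⟩
      rw [hk, coeff_sq_even h2P _ k, coeff_sq_odd h2L _ hmodd]
    · rw [coeff_sq_odd h2P _ (Nat.not_even_iff_odd.mpr hjo), map_zero]
  rw [hCa0, map_zero, hQ0, add_zero, add_zero, coeff_hshift, ← Nat.choose_symm_add]

end TorsionAux

open TorsionAux in
/-- precise part of Lemma 6.2 of the paper: let `L` be a field of
characteristic `2`, `x, z ∈ L` with `z² + z = x³`, `x ≠ 0`, and `θ` an iterative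
derivation on `L`.  With `h := (θ(z)+z/(1+z))·(θ(x)+x/(1+z))⁻¹` and
`f := θ(x)+x/(1+z)+h²` (the `x`-coordinate of `η_L ⊖ θ_*(η_L)`), written as
`f = Σ_m f_m T^m`, one has `θ^(m)(f_j) = binom(m+j, m)·f_{m+j}` for all `m, j ≥ 1`
such that `m` and `j` are not both even. -/
theorem torsion_group_schemes_stmt_13 {L : Type*} [Field L] [CharP L 2]
    (x z : L) (hzx : z ^ 2 + z = x ^ 3) (hx : x ≠ 0)
    (θ : L →+* PowerSeries L) (hθ : IsIterativeDerivation θ) :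
    let h : PowerSeries L :=
      (θ z + PowerSeries.C (z / (1 + z))) * (θ x + PowerSeries.C (x / (1 + z)))⁻¹
    let f : PowerSeries L := θ x + PowerSeries.C (x / (1 + z)) + h ^ 2
    ∀ m j : ℕ, 1 ≤ m → 1 ≤ j → ¬ (Even m ∧ Even j) →
      hdCoeff θ m (coeff j f) = ((m + j).choose m : L) * coeff (m + j) f := by
  intro h f m j hm hj hmj
  have h2L : (2 : L) = 0 := by exact_mod_cast CharP.cast_eq_zero L 2
  have hz1 : z * (z + 1) ≠ 0 := by
    rw [show z * (z + 1) = z ^ 2 + z by ring, hzx]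
    exact pow_ne_zero _ hx
  have hz : z ≠ 0 := fun hc => hz1 (by rw [hc, zero_mul])
  have h1z : (1 : L) + z ≠ 0 := by
    intro hc
    exact hz1 (by rw [show z + 1 = 1 + z by ring, hc, mul_zero])
  have hxcx : x + x / (1 + z) ≠ 0 := by
    have e : x + x / (1 + z) = x * z / (1 + z) := by
      field_simp
      linear_combination h2L
    rw [e]
    exact div_ne_zero (mul_ne_zero hx hz) h1z
  have hcu : PowerSeries.constantCoeff (θ x + PowerSeries.C (x / (1 + z))) ≠ 0 := by
    rw [map_add, hθ.1 x, PowerSeries.constantCoeff_C]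
    exact hxcx
  exact TorsionAux.main θ hθ h2L (x / (1 + z)) (z / (1 + z)) x z
    (θ x + PowerSeries.C (x / (1 + z))) (θ z + PowerSeries.C (z / (1 + z)))
    f rfl rfl hcu rfl m j hj hmj
end
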